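/- Let ℓ be a prime, m ∈ ℕ ∪ {∞}, and K a field. Let v_1, v_2 be two valuations of K, and assume there exists an element σ ∈ D_{v_1}^m ∩ D_{v_2}^m such that σ is not valuative. Then the valuations v_1 and v_2 are comparable. -/

import Mathlib

open Polynomial

noncomputable section

/-- The coefficient ring `Λ_m`: `ℤ/ℓ^m` for finite `m`, and `ℤ_ℓ` for `m = ∞`. -/
def Lam (ℓ : ℕ) [Fact ℓ.Prime] : ℕ∞ → Type
  | ⊤ => PadicInt ℓ
  | (m : ℕ) => ZMod (ℓ ^ m)

instance (ℓ : ℕ) [Fact ℓ.Prime] : (m : ℕ∞) → CommRing (Lam ℓ m)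
  | ⊤ => inferInstanceAs (CommRing (PadicInt ℓ))
  | (m : ℕ) => inferInstanceAs (CommRing (ZMod (ℓ ^ m)))

/-- The canonical projection `Λ_m → Λ_n` (for `n ≤ m`; junk value `0` otherwise). -/
def LamProj (ℓ : ℕ) [Fact ℓ.Prime] : (m n : ℕ∞) → Lam ℓ m →+ Lam ℓ n
  | ⊤, ⊤ => AddMonoidHom.id _
  | ⊤, (n : ℕ) => (PadicInt.toZModPow n).toAddMonoidHom
  | (m : ℕ), (n : ℕ) =>
      if h : ℓ ^ n ∣ ℓ ^ m then (ZMod.castHom h (ZMod (ℓ ^ n))).toAddMonoidHom else 0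
  | (_ : ℕ), ⊤ => 0

/-- The `ℓ^m`-minimized Galois group `𝔤^m(K) = Hom(Kˣ, Λ_m)`. -/
abbrev gal (ℓ : ℕ) [Fact ℓ.Prime] (m : ℕ∞) (K : Type*) [Field K] : Type _ :=
  Additive Kˣ →+ Lam ℓ m

variable {ℓ : ℕ} [Fact ℓ.Prime] {K : Type*} [Field K]

open scoped Classical

/-- Evaluation of `σ ∈ 𝔤^m(K)` at a unit of `K`. -/
def galu {m : ℕ∞} (σ : gal ℓ m K) (x : Kˣ) : Lam ℓ m :=
  σ (Additive.ofMul x)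

/-- Evaluation of `σ ∈ 𝔤^m(K)` at an arbitrary element of `K` (junk value `0` at `0`). -/
def galApp {m : ℕ∞} (σ : gal ℓ m K) (x : K) : Lam ℓ m :=
  if hx : x ≠ 0 then galu σ (Units.mk0 x hx) else 0

/-- Scalar multiplication of `𝔤^m(K)` by `Λ_m`. -/
def galSmul {m : ℕ∞} (a : Lam ℓ m) (σ : gal ℓ m K) : gal ℓ m K :=
  AddMonoidHom.mk' (fun x => a * σ x) (by intro x y; simp only [map_add, mul_add])

/-- The canonical map `𝔤^m(K) → 𝔤^n(K)`, `σ ↦ σ_n`. -/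
def galProj (m n : ℕ∞) (σ : gal ℓ m K) : gal ℓ n K :=
  (LamProj ℓ m n).comp σ

/-- `(σ,τ)` is a C-pair: `σ(x)·τ(1−x) = σ(1−x)·τ(x)` for all `x ∈ K ∖ {0,1}`. -/
def IsCPair {m : ℕ∞} (σ τ : gal ℓ m K) : Prop :=
  ∀ x : K, x ≠ 0 → x ≠ 1 →
    galApp σ x * galApp τ (1 - x) = galApp σ (1 - x) * galApp τ x

/-- A subset of `𝔤^m(K)` is a C-set if all pairs of its elements are C-pairs. -/
def IsCSet {m : ℕ∞} (S : Set (gal ℓ m K)) : Prop :=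
  ∀ σ ∈ S, ∀ τ ∈ S, IsCPair σ τ

/-- `μ_{c·ℓ^m} ⊂ K`: the polynomial `X^{c·ℓ^m} − 1` splits completely in `K`
(for all finite exponents when `m = ∞`). -/
def MuIn (K : Type*) [Field K] (c ℓ : ℕ) : ℕ∞ → Prop
  | ⊤ => ∀ k : ℕ, Polynomial.Splits ((Polynomial.X : Polynomial K) ^ (c * ℓ ^ k) - 1)
  | (N : ℕ) => Polynomial.Splits ((Polynomial.X : Polynomial K) ^ (c * ℓ ^ N) - 1)

/-- `M_r(n) = (r+1)·n − r`. -/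
def Mfun (r : ℕ) : ℕ∞ → ℕ∞
  | ⊤ => ⊤
  | (n : ℕ) => (((r + 1) * n - r : ℕ) : ℕ∞)

/-- `N(n) = M_1((6·ℓ^{3n−2} − 7)·(n−1) + 3n − 2)`. -/
def Nfun (ℓ : ℕ) : ℕ∞ → ℕ∞
  | ⊤ => ⊤
  | (n : ℕ) => Mfun 1 (((6 * ℓ ^ (3 * n - 2) - 7) * (n - 1) + 3 * n - 2 : ℕ) : ℕ∞)

/-- `R(n) = N(M_2(M_1(n)))`. -/
def Rfun (ℓ : ℕ) (n : ℕ∞) : ℕ∞ :=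
  Nfun ℓ (Mfun 2 (Mfun 1 n))

/-- The minimized inertia group `I_v^m` of a valuation (valuation subring) of `K`:
homomorphisms vanishing on the `v`-units. -/
def inertia (ℓ : ℕ) [Fact ℓ.Prime] (m : ℕ∞) (A : ValuationSubring K) : Set (gal ℓ m K) :=
  {σ | ∀ x : Kˣ, A.valuation (x : K) = 1 → galu σ x = 0}

/-- The minimized decomposition group `D_v^m` of a valuation (valuation subring) of `K`:
homomorphisms vanishing on the principal `v`-units `1 + 𝔪_v`. -/
def decomp (ℓ : ℕ) [Fact ℓ.Prime] (m : ℕ∞) (A : ValuationSubring K) : Set (gal ℓ m K) :=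
  {σ | ∀ x : Kˣ, A.valuation ((x : K) - 1) < 1 → galu σ x = 0}

/-- A subgroup of (the units of) a linearly ordered group-with-zero is convex. -/
def IsConvexSub {Γ : Type*} [LinearOrderedCommGroupWithZero Γ] (C : Subgroup Γˣ) : Prop :=
  ∀ γ c : Γˣ, (1 : Γ) ≤ (γ : Γ) → (γ : Γ) ≤ (c : Γ) → c ∈ C → γ ∈ C

/-- A subgroup is `ℓ`-divisible. -/
def IsLDivisible {Γ : Type*} [LinearOrderedCommGroupWithZero Γ] (ℓ : ℕ) (C : Subgroup Γˣ) :
    Prop :=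
  ∀ c ∈ C, ∃ d ∈ C, d ^ ℓ = c

/-- Condition (V1): the value group `vK` contains no nontrivial `ℓ`-divisible convex
subgroups. -/
def NoLDivConvex (ℓ : ℕ) (A : ValuationSubring K) : Prop :=
  ∀ C : Subgroup (A.ValueGroup)ˣ, IsConvexSub C → IsLDivisible ℓ C → C = ⊥

/-- The residue field `Kv` of a valuation. -/
abbrev resField (A : ValuationSubring K) : Type _ := IsLocalRing.ResidueField A

/-- `τ ∈ 𝔤^m(Kv)` is the element induced by `σ ∈ D_v^m` (i.e. `τ = σ_v`): for every
`v`-unit `x` one has `τ(x̄) = σ(x)`. -/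
def Induces {m : ℕ∞} (A : ValuationSubring K) (σ : gal ℓ m K)
    (τ : gal ℓ m (resField A)) : Prop :=
  ∀ (x : Kˣ) (h : A.valuation (x : K) = 1),
    galApp τ (IsLocalRing.residue A ⟨(x : K), (A.valuation_le_one_iff (x : K)).mp h.le⟩) =
      galu σ x

/-- An `m`-visible valuation. -/
def IsVisibleVal (ℓ : ℕ) [Fact ℓ.Prime] (m : ℕ∞) (A : ValuationSubring K) : Prop :=
  NoLDivConvex ℓ A ∧
  ¬ IsCSet (Set.univ : Set (gal ℓ m (resField A))) ∧
  ∀ B : ValuationSubring (resField A),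
    decomp ℓ m B = Set.univ → inertia ℓ m B = {0}

/-- `Σ^⊥ = ∩_{σ ∈ Σ} ker σ ⊆ Kˣ`. -/
def orth {m : ℕ∞} (S : Set (gal ℓ m K)) : Set Kˣ :=
  {x | ∀ σ ∈ S, galu σ x = 0}

/-- `σ` is valuative: `σ ∈ I_v^m` for some valuation `v` of `K`. -/
def IsValuative {m : ℕ∞} (σ : gal ℓ m K) : Prop :=
  ∃ A : ValuationSubring K, σ ∈ inertia ℓ m A

/-- `V = v_σ` is the coarsest valuation with `σ ∈ I_V^m`. -/
def IsVsigma {m : ℕ∞} (σ : gal ℓ m K) (V : ValuationSubring K) : Prop :=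
  σ ∈ inertia ℓ m V ∧ ∀ W : ValuationSubring K, σ ∈ inertia ℓ m W → W ≤ V

/-- `V = v_Σ` is the coarsest valuation with `Σ ⊆ I_V^m`. -/
def IsVSet {m : ℕ∞} (S : Set (gal ℓ m K)) (V : ValuationSubring K) : Prop :=
  S ⊆ inertia ℓ m V ∧ ∀ W : ValuationSubring K, S ⊆ inertia ℓ m W → W ≤ V

/-- The set `D^m_n(Σ)`. -/
def Dmn (n m : ℕ∞) (S : Set (gal ℓ n K)) : Set (gal ℓ n K) :=
  {τ | ∀ σ ∈ S, ∃ τ₁ τ₂ : gal ℓ n K, ∃ σ' τ' τ₁' τ₂' : gal ℓ m K,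
    galProj m n σ' = σ ∧ galProj m n τ' = τ ∧ galProj m n τ₁' = τ₁ ∧ galProj m n τ₂' = τ₂ ∧
    ¬ IsCPair τ₁ τ₂ ∧ IsCPair σ' τ' ∧ IsCPair σ' τ₁' ∧ IsCPair σ' τ₂'}

/-- The set `I^m_n(Σ)`. -/
def Imn (n m : ℕ∞) (S : Set (gal ℓ n K)) : Set (gal ℓ n K) :=
  {σ | σ ∈ S ∧ ∃ σ' : gal ℓ m K, galProj m n σ' = σ ∧
    ∀ τ ∈ S, ∃ τ' : gal ℓ m K, galProj m n τ' = τ ∧ IsCPair σ' τ'}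

/-- `K` is a function field over `k`, i.e. a finitely generated field extension. -/
def IsFunctionField (k K : Type*) [Field k] [Field K] [Algebra k K] : Prop :=
  ∃ s : Finset K, IntermediateField.adjoin k (s : Set K) = ⊤

/-- `trdeg(K|k) = d`. -/
def HasTrdeg (k K : Type*) [Field k] [Field K] [Algebra k K] (d : ℕ) : Prop :=
  ∃ b : Fin d → K, IsTranscendenceBasis k b


/-- The set `ℓ^n·𝔤^m(K)` (interpreted as the trivial subgroup when `n = ∞`). -/
def lPowSet (ℓ : ℕ) [Fact ℓ.Prime] (m : ℕ∞) (K : Type*) [Field K] : ℕ∞ → Set (gal ℓ m K)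
  | ⊤ => {0}
  | (k : ℕ) => {x | ∃ σ : gal ℓ m K, x = galSmul ((ℓ : Lam ℓ m) ^ k) σ}

end


section Stmt15Aux

variable {K : Type*} [Field K]

/-- Big-small lemma: elements of the generated subring are `B`-dominated by elements
that are `A`-small. -/
lemma stmt15_bs (A B : ValuationSubring K) (x : K) (hx0 : x ≠ 0)
    (hxA : A.valuation x < 1) (hxB : 1 < B.valuation x) :
    ∀ u ∈ Subring.closure ((A : Set K) ∪ (B : Set K)),
      ∃ t : K, t ≠ 0 ∧ A.valuation t < 1 ∧ B.valuation u < B.valuation t := by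
  intro u hu
  have hvx0 : (0 : B.ValueGroup) < B.valuation x := by
    rw [zero_lt_iff]; exact (Valuation.ne_zero_iff _).mpr hx0
  induction hu using Subring.closure_induction with
  | mem y hy =>
      rcases hy with hy | hy
      · by_cases hy0 : y = 0
        · exact ⟨x, hx0, hxA, by simpa [hy0]⟩
        · refine ⟨y * x, mul_ne_zero hy0 hx0, ?_, ?_⟩
          · have h1 : A.valuation y ≤ 1 := (A.valuation_le_one_iff y).mpr hy
            calc A.valuation (y * x) = A.valuation y * A.valuation x := map_mul _ _ _
              _ ≤ 1 * A.valuation x := mul_le_mul_left h1 _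
              _ = A.valuation x := one_mul _
              _ < 1 := hxA
          · have hy2 : B.valuation y ≠ 0 := (Valuation.ne_zero_iff _).mpr hy0
            calc B.valuation y = B.valuation y * 1 := (mul_one _).symm
              _ < B.valuation y * B.valuation x :=
                  mul_lt_mul_of_pos_left hxB (zero_lt_iff.mpr hy2)
              _ = B.valuation (y * x) := (map_mul _ _ _).symm
      · exact ⟨x, hx0, hxA, lt_of_le_of_lt ((B.valuation_le_one_iff y).mpr hy) hxB⟩
  | zero => exact ⟨x, hx0, hxA, by simpa⟩
  | one => exact ⟨x, hx0, hxA, by simpa using hxB⟩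
  | add a b ha hb iha ihb =>
      obtain ⟨ta, hta0, htaA, htaB⟩ := iha
      obtain ⟨tb, htb0, htbA, htbB⟩ := ihb
      rcases le_total (B.valuation a) (B.valuation b) with h | h
      · exact ⟨tb, htb0, htbA,
          lt_of_le_of_lt (le_trans (B.valuation.map_add a b) (max_le h le_rfl)) htbB⟩
      · exact ⟨ta, hta0, htaA,
          lt_of_le_of_lt (le_trans (B.valuation.map_add a b) (max_le le_rfl h)) htaB⟩
  | neg a ha iha =>
      obtain ⟨ta, hta0, htaA, htaB⟩ := iha
      exact ⟨ta, hta0, htaA, by simpa using htaB⟩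
  | mul a b ha hb iha ihb =>
      obtain ⟨ta, hta0, htaA, htaB⟩ := iha
      obtain ⟨tb, htb0, htbA, htbB⟩ := ihb
      refine ⟨ta * tb, mul_ne_zero hta0 htb0, ?_, ?_⟩
      · calc A.valuation (ta * tb) = A.valuation ta * A.valuation tb := map_mul _ _ _
          _ ≤ A.valuation ta * 1 := mul_le_mul_right htbA.le _
          _ = A.valuation ta := mul_one _
          _ < 1 := htaA
      · calc B.valuation (a * b) = B.valuation a * B.valuation b := map_mul _ _ _
          _ < B.valuation ta * B.valuation tb := mul_lt_mul'' htaB htbB zero_le' zero_le'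
          _ = B.valuation (ta * tb) := (map_mul _ _ _).symm

/-- Existence of a principal `B`-unit with prescribed `A`-value. -/
lemma stmt15_step (A B : ValuationSubring K) (x : K) (hx0 : x ≠ 0)
    (hxA : A.valuation x < 1) (hxB : 1 < B.valuation x)
    (u : K) (hu0 : u ≠ 0) (hu : u ∈ Subring.closure ((A : Set K) ∪ (B : Set K)))
    (hu' : u⁻¹ ∈ Subring.closure ((A : Set K) ∪ (B : Set K))) :
    ∃ z : K, z ≠ 0 ∧ B.valuation (z - 1) < 1 ∧ A.valuation z = A.valuation u := by
  have key : ∀ w : K, w ≠ 0 → w ∈ Subring.closure ((A : Set K) ∪ (B : Set K)) →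
      1 < A.valuation w →
      ∃ z : K, z ≠ 0 ∧ B.valuation (z - 1) < 1 ∧ A.valuation z = A.valuation w := by
    intro w hw0 hw hwA
    -- find t₀ that is A-small and B-large (larger than B.valuation w and 1)
    obtain ⟨t₀, ht₀0, ht₀A, ht₀B, ht₀B1⟩ :
        ∃ t₀ : K, t₀ ≠ 0 ∧ A.valuation t₀ < 1 ∧ B.valuation w < B.valuation t₀ ∧
          1 < B.valuation t₀ := by
      rcases le_or_gt 1 (B.valuation w) with h | h
      · obtain ⟨t₀, h0, hA, hB⟩ := stmt15_bs A B x hx0 hxA hxB w hw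
        exact ⟨t₀, h0, hA, hB, lt_of_le_of_lt h hB⟩
      · exact ⟨x, hx0, hxA, lt_trans h hxB, hxB⟩
    have hvt₀A : (0 : A.ValueGroup) < A.valuation t₀ := by
      rw [zero_lt_iff]; exact (Valuation.ne_zero_iff _).mpr ht₀0
    have hvt₀B : (0 : B.ValueGroup) < B.valuation t₀ := by
      rw [zero_lt_iff]; exact (Valuation.ne_zero_iff _).mpr ht₀0
    set t : K := t₀⁻¹ with ht_def
    have htA : 1 < A.valuation t := by
      rw [ht_def, map_inv₀]; exact (one_lt_inv₀ hvt₀A).mpr ht₀A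
    have htB : B.valuation t < 1 := by
      rw [ht_def, map_inv₀]; exact (inv_lt_one₀ hvt₀B).mpr ht₀B1
    have hwtB : B.valuation w * B.valuation t < 1 := by
      rw [ht_def, map_inv₀]
      exact mul_inv_lt_of_lt_mul₀ (by simpa using ht₀B)
    -- 1 + t
    have h1tA : A.valuation (1 + t) = A.valuation t := by
      have := Valuation.map_add_eq_of_lt_right A.valuation
        (x := (1 : K)) (y := t) (by simpa using htA)
      simpa using this
    have h1tB : B.valuation (1 + t) = 1 := Valuation.map_one_add_of_lt _ htB
    have h1t0 : (1 : K) + t ≠ 0 := by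
      intro h
      rw [h] at h1tB
      simp at h1tB
    set r : K := t / (1 + t) with hr_def
    have hrA : A.valuation r = 1 := by
      rw [hr_def, map_div₀, h1tA]
      exact div_self (ne_of_gt (lt_trans zero_lt_one htA))
    have hrB : B.valuation r = B.valuation t := by
      rw [hr_def, map_div₀, h1tB, div_one]
    set s : K := w * r with hs_def
    have hsA : A.valuation s = A.valuation w := by
      rw [hs_def, map_mul, hrA, mul_one]
    have hsB : B.valuation s < 1 := by
      rw [hs_def, map_mul, hrB]; exact hwtB
    refine ⟨1 + s, ?_, ?_, ?_⟩
    · intro h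
      have : A.valuation (1 + s) = A.valuation s := by
        have := Valuation.map_add_eq_of_lt_right A.valuation
          (x := (1 : K)) (y := s) (by rw [hsA]; simpa using hwA)
        simpa using this
      rw [h, hsA] at this
      exact hw0 ((Valuation.zero_iff _).mp this.symm)
    · simpa using hsB
    · have := Valuation.map_add_eq_of_lt_right A.valuation
        (x := (1 : K)) (y := s) (by rw [hsA]; simpa using hwA)
      simpa [hsA] using this
  rcases lt_trichotomy (A.valuation u) 1 with h | h | h
  · -- apply key to u⁻¹
    have hvu : (0 : A.ValueGroup) < A.valuation u := by
      rw [zero_lt_iff]; exact (Valuation.ne_zero_iff _).mpr hu0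
    have h' : 1 < A.valuation u⁻¹ := by
      rw [map_inv₀]; exact (one_lt_inv₀ hvu).mpr h
    obtain ⟨z, hz0, hzB, hzA⟩ := key u⁻¹ (inv_ne_zero hu0) hu' h'
    have hzB1 : B.valuation z = 1 := by
      have : B.valuation (1 + (z - 1)) = 1 := Valuation.map_one_add_of_lt _ hzB
      simpa using this
    refine ⟨z⁻¹, inv_ne_zero hz0, ?_, ?_⟩
    · have hid : z⁻¹ - 1 = z⁻¹ * (1 - z) := by field_simp
      have h1z : B.valuation (1 - z) = B.valuation (z - 1) := by
        rw [show (1 : K) - z = -(z - 1) by ring, Valuation.map_neg]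
      rw [hid, map_mul, map_inv₀, hzB1, inv_one, one_mul, h1z]
      exact hzB
    · rw [map_inv₀, hzA, map_inv₀, inv_inv]
  · exact ⟨1, one_ne_zero, by simpa using (zero_lt_one : (0 : B.ValueGroup) < 1),
      by rw [map_one, h]⟩
  · exact key u hu0 hu h

end Stmt15Aux

/-- Two valuations sharing a non-valuative decomposition element are comparable. -/
theorem stmt15 (ℓ : ℕ) [Fact ℓ.Prime] (m : ℕ∞) (hm : 1 ≤ m) (K : Type*) [Field K]
    (V₁ V₂ : ValuationSubring K) (σ : gal ℓ m K)
    (h₁ : σ ∈ decomp ℓ m V₁) (h₂ : σ ∈ decomp ℓ m V₂) (hnv : ¬ IsValuative σ) :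
    V₁ ≤ V₂ ∨ V₂ ≤ V₁ := by
  by_contra hcon
  push_neg at hcon
  obtain ⟨h12, h21⟩ := hcon
  obtain ⟨a, haV₁, haV₂⟩ := SetLike.not_le_iff_exists.mp h12
  obtain ⟨b, hbV₂, hbV₁⟩ := SetLike.not_le_iff_exists.mp h21
  have ha0 : a ≠ 0 := fun h => haV₂ (h ▸ zero_mem V₂)
  have hb0 : b ≠ 0 := fun h => hbV₁ (h ▸ zero_mem V₁)
  -- the cross element x = a * b⁻¹
  set x : K := a * b⁻¹ with hx_def
  have hx0 : x ≠ 0 := mul_ne_zero ha0 (inv_ne_zero hb0)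
  have hv1b : 1 < V₁.valuation b :=
    lt_of_not_ge (fun h => hbV₁ ((V₁.valuation_le_one_iff b).mp h))
  have hv2a : 1 < V₂.valuation a :=
    lt_of_not_ge (fun h => haV₂ ((V₂.valuation_le_one_iff a).mp h))
  have hv1b0 : (0 : V₁.ValueGroup) < V₁.valuation b := lt_trans zero_lt_one hv1b
  have hv2b0 : (0 : V₂.ValueGroup) < V₂.valuation b := by
    rw [zero_lt_iff]; exact (Valuation.ne_zero_iff _).mpr hb0
  have hxA : V₁.valuation x < 1 := by
    rw [hx_def, map_mul, map_inv₀]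
    calc V₁.valuation a * (V₁.valuation b)⁻¹ ≤ 1 * (V₁.valuation b)⁻¹ :=
          mul_le_mul_left ((V₁.valuation_le_one_iff a).mpr haV₁) _
      _ = (V₁.valuation b)⁻¹ := one_mul _
      _ < 1 := (inv_lt_one₀ hv1b0).mpr hv1b
  have hxB : 1 < V₂.valuation x := by
    rw [hx_def, map_mul, map_inv₀]
    calc (1 : V₂.ValueGroup) < V₂.valuation a := hv2a
      _ = V₂.valuation a * 1 := (mul_one _).symm
      _ ≤ V₂.valuation a * (V₂.valuation b)⁻¹ :=
          mul_le_mul_right ((one_le_inv₀ hv2b0).mpr ((V₂.valuation_le_one_iff b).mpr hbV₂)) _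
  -- the valuation ring generated by V₁ and V₂
  set Csub : Subring K := Subring.closure ((V₁ : Set K) ∪ (V₂ : Set K)) with hCsub
  have hV₁C : ∀ y : K, y ∈ V₁ → y ∈ Csub := fun y hy =>
    Subring.subset_closure (Or.inl hy)
  have hV₂C : ∀ y : K, y ∈ V₂ → y ∈ Csub := fun y hy =>
    Subring.subset_closure (Or.inr hy)
  set C : ValuationSubring K :=
    { Csub with mem_or_inv_mem' := fun y =>
        (V₁.mem_or_inv_mem y).imp (fun h => hV₁C _ h) (fun h => hV₁C _ h) } with hC_def
  have hmemC : ∀ y : K, y ∈ C ↔ y ∈ Csub := fun y => Iff.rfl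
  refine hnv ⟨C, ?_⟩
  intro u huv
  -- u is a unit of C
  have hu0 : (u : K) ≠ 0 := Units.ne_zero u
  have huC : (u : K) ∈ Csub := by
    have := (C.valuation_le_one_iff (u : K)).mp huv.le
    exact this
  have huC' : (u : K)⁻¹ ∈ Csub := by
    have h1 : C.valuation (u : K)⁻¹ ≤ 1 := by
      rw [map_inv₀, huv, inv_one]
    exact (C.valuation_le_one_iff _).mp h1
  -- Step 1: kill the V₁-value with a principal V₂-unit
  obtain ⟨z₂, hz₂0, hz₂B, hz₂A⟩ := stmt15_step V₁ V₂ x hx0 hxA hxB (u : K) hu0 huC huC'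
  have hz₂v2 : V₂.valuation z₂ = 1 := by
    have : V₂.valuation (1 + (z₂ - 1)) = 1 := Valuation.map_one_add_of_lt _ hz₂B
    simpa using this
  have hz₂C : z₂ ∈ Csub := hV₂C _ ((V₂.valuation_le_one_iff z₂).mp hz₂v2.le)
  have hz₂C' : z₂⁻¹ ∈ Csub := by
    refine hV₂C _ ((V₂.valuation_le_one_iff _).mp ?_)
    rw [map_inv₀, hz₂v2, inv_one]
  set u₁ : K := (u : K) * z₂⁻¹ with hu₁_def
  have hu₁0 : u₁ ≠ 0 := mul_ne_zero hu0 (inv_ne_zero hz₂0)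
  have hvz₂0 : (V₁.valuation z₂ : V₁.ValueGroup) ≠ 0 := (Valuation.ne_zero_iff _).mpr hz₂0
  have hu₁v1 : V₁.valuation u₁ = 1 := by
    rw [hu₁_def, map_mul, map_inv₀, ← hz₂A, mul_inv_cancel₀ hvz₂0]
  have hu₁v2 : V₂.valuation u₁ = V₂.valuation (u : K) := by
    rw [hu₁_def, map_mul, map_inv₀, hz₂v2, inv_one, mul_one]
  have hu₁C : u₁ ∈ Csub := mul_mem huC hz₂C'
  have hu₁C' : u₁⁻¹ ∈ Csub := by
    rw [hu₁_def, mul_inv_rev, inv_inv]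
    exact mul_mem hz₂C huC'
  -- Step 2: kill the V₂-value with a principal V₁-unit (roles of V₁, V₂ swapped)
  have hclosure_symm : Subring.closure ((V₂ : Set K) ∪ (V₁ : Set K)) = Csub := by
    rw [hCsub, Set.union_comm]
  have hx'0 : x⁻¹ ≠ 0 := inv_ne_zero hx0
  have hvx01 : (0 : V₁.ValueGroup) < V₁.valuation x := by
    rw [zero_lt_iff]; exact (Valuation.ne_zero_iff _).mpr hx0
  have hvx02 : (0 : V₂.ValueGroup) < V₂.valuation x := lt_trans zero_lt_one hxB
  have hx'B : V₂.valuation x⁻¹ < 1 := by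
    rw [map_inv₀]; exact (inv_lt_one₀ hvx02).mpr hxB
  have hx'A : 1 < V₁.valuation x⁻¹ := by
    rw [map_inv₀]; exact (one_lt_inv₀ hvx01).mpr hxA
  obtain ⟨z₁, hz₁0, hz₁B, hz₁A⟩ := stmt15_step V₂ V₁ x⁻¹ hx'0 hx'B hx'A u₁ hu₁0
    (hclosure_symm ▸ hu₁C) (hclosure_symm ▸ hu₁C')
  have hz₁v1 : V₁.valuation z₁ = 1 := by
    have : V₁.valuation (1 + (z₁ - 1)) = 1 := Valuation.map_one_add_of_lt _ hz₁B
    simpa using this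
  set u₂ : K := u₁ * z₁⁻¹ with hu₂_def
  have hu₂0 : u₂ ≠ 0 := mul_ne_zero hu₁0 (inv_ne_zero hz₁0)
  have hvz₁0 : (V₂.valuation z₁ : V₂.ValueGroup) ≠ 0 := (Valuation.ne_zero_iff _).mpr hz₁0
  have hu₂v2 : V₂.valuation u₂ = 1 := by
    rw [hu₂_def, map_mul, map_inv₀, ← hz₁A]
    exact mul_inv_cancel₀ hvz₁0
  have hu₂v1 : V₁.valuation u₂ = 1 := by
    rw [hu₂_def, map_mul, map_inv₀, hz₁v1, inv_one, mul_one, hu₁v1]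
  -- Step 3: split u₂ into a principal V₁-unit and a principal V₂-unit
  have h1x0 : (1 : K) + x ≠ 0 := by
    intro h
    have : V₁.valuation (1 + x) = 1 := Valuation.map_one_add_of_lt _ hxA
    rw [h] at this
    simp at this
  have h1xv1 : V₁.valuation (1 + x) = 1 := Valuation.map_one_add_of_lt _ hxA
  have h1xv2 : V₂.valuation (1 + x) = V₂.valuation x := by
    have := Valuation.map_add_eq_of_lt_right V₂.valuation
      (x := (1 : K)) (y := x) (by simpa using hxB)
    simpa using this
  have hxu₂v2 : V₂.valuation (x * u₂) = V₂.valuation x := by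
    rw [map_mul, hu₂v2, mul_one]
  have h1xu₂v2 : V₂.valuation (1 + x * u₂) = V₂.valuation x := by
    have := Valuation.map_add_eq_of_lt_right V₂.valuation
      (x := (1 : K)) (y := x * u₂) (by rw [hxu₂v2]; simpa using hxB)
    rw [this, hxu₂v2]
  have h1xu₂0 : (1 : K) + x * u₂ ≠ 0 := by
    intro h
    rw [h] at h1xu₂v2
    exact (ne_of_gt hvx02) (by simpa using h1xu₂v2.symm)
  set y : K := (1 + x * u₂) / (1 + x) with hy_def
  have hy0 : y ≠ 0 := div_ne_zero h1xu₂0 h1x0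
  have hyv2 : V₂.valuation y = 1 := by
    rw [hy_def, map_div₀, h1xu₂v2, h1xv2]
    exact div_self (ne_of_gt hvx02)
  have hyv1 : V₁.valuation (y - 1) < 1 := by
    have hid : y - 1 = x * (u₂ - 1) / (1 + x) := by
      rw [hy_def]; field_simp; ring
    rw [hid, map_div₀, h1xv1, div_one, map_mul]
    calc V₁.valuation x * V₁.valuation (u₂ - 1) ≤ V₁.valuation x * 1 := by
          refine mul_le_mul_right ?_ _
          have := Valuation.map_sub V₁.valuation u₂ 1
          simpa [hu₂v1] using this
      _ = V₁.valuation x := mul_one _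
      _ < 1 := hxA
  set w : K := u₂ / y with hw_def
  have hw0 : w ≠ 0 := div_ne_zero hu₂0 hy0
  have hwv2 : V₂.valuation (w - 1) < 1 := by
    have hid : w - 1 = (u₂ - 1) / ((1 + x) * y) := by
      have hy' : y * (1 + x) = 1 + x * u₂ := by rw [hy_def]; exact div_mul_cancel₀ _ h1x0
      have hyy : u₂ / y * y = u₂ := div_mul_cancel₀ _ hy0
      rw [eq_div_iff (mul_ne_zero h1x0 hy0), hw_def]
      linear_combination (1 + x) * hyy - hy'
    rw [hid, map_div₀, map_mul, h1xv2, hyv2, mul_one]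
    have hnum : V₂.valuation (u₂ - 1) ≤ 1 := by
      have := Valuation.map_sub V₂.valuation u₂ 1
      simpa [hu₂v2] using this
    calc V₂.valuation (u₂ - 1) / V₂.valuation x
        = V₂.valuation (u₂ - 1) * (V₂.valuation x)⁻¹ := div_eq_mul_inv _ _
      _ ≤ 1 * (V₂.valuation x)⁻¹ := mul_le_mul_left hnum _
      _ = (V₂.valuation x)⁻¹ := one_mul _
      _ < 1 := (inv_lt_one₀ hvx02).mpr hxB
  -- assemble: u = z₂ * z₁ * y * w in Kˣ
  have huk : (u : K) = z₂ * z₁ * y * w := by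
    rw [hw_def, hu₂_def, hu₁_def]
    field_simp
  set Z₂ : Kˣ := Units.mk0 z₂ hz₂0
  set Z₁ : Kˣ := Units.mk0 z₁ hz₁0
  set Y : Kˣ := Units.mk0 y hy0
  set W : Kˣ := Units.mk0 w hw0
  have hu_eq : u = Z₂ * Z₁ * Y * W := by
    ext
    simpa [Z₂, Z₁, Y, W] using huk
  have hgalu_mul : ∀ p q : Kˣ, galu σ (p * q) = galu σ p + galu σ q := by
    intro p q
    unfold galu
    rw [ofMul_mul, map_add]
  rw [hu_eq, hgalu_mul, hgalu_mul, hgalu_mul]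
  rw [h₂ Z₂ (by simpa [Z₂] using hz₂B), h₁ Z₁ (by simpa [Z₁] using hz₁B),
    h₁ Y (by simpa [Y] using hyv1), h₂ W (by simpa [W] using hwv2)]
  simp
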